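/- Let X be a real random variable, B a real random variable, and suppose a(X) = B + c(X)·L almost surely, where X is independent of (B, L), a and c are measurable real functions with a(X), c(X) square-integrable, and L is a real random variable. If Var(a(X)) , Var(c(X)) and Cov(a(X), c(X)) are such that Var(c(X)) > 0, then L takes almost surely at most two values, namely the roots of the quadratic t ↦ Var(c(X))·t² − 2·Cov(a(X),c(X))·t + Var(a(X)). -/

import Mathlib

open MeasureTheory ProbabilityTheory

/-- If a(X) = B + c(X)·L a.s. with X independent of (B, L) and Var(c(X)) > 0, then L is
almost surely a root of the quadratic t ↦ Var(c(X))·t² − 2·Cov(a(X),c(X))·t + Var(a(X))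
(so L takes at most two values a.s.). -/
theorem stmt3 {Ω : Type*} [MeasurableSpace Ω] (μ : Measure Ω) [IsProbabilityMeasure μ]
    (X B L : Ω → ℝ) (a c : ℝ → ℝ)
    (hX : Measurable X) (hB : AEMeasurable B μ) (hL : AEMeasurable L μ)
    (ha : Measurable a) (hc : Measurable c)
    (haX : MemLp (fun ω => a (X ω)) 2 μ) (hcX : MemLp (fun ω => c (X ω)) 2 μ)
    (hindep : IndepFun X (fun ω => (B ω, L ω)) μ)
    (heq : ∀ᵐ ω ∂μ, a (X ω) = B ω + c (X ω) * L ω)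
    (hvar : 0 < variance (fun ω => c (X ω)) μ) :
    ∀ᵐ ω ∂μ,
      variance (fun ω => c (X ω)) μ * (L ω) ^ 2
        - 2 * ((∫ ω, a (X ω) * c (X ω) ∂μ)
                - (∫ ω, a (X ω) ∂μ) * (∫ ω, c (X ω) ∂μ)) * L ω
        + variance (fun ω => a (X ω)) μ = 0 := by
  have hBL : AEMeasurable (fun ω => (B ω, L ω)) μ := hB.prodMk hL
  set ν : Measure ℝ := μ.map X with hν
  set κ : Measure (ℝ × ℝ) := μ.map (fun ω => (B ω, L ω)) with hκ
  have hνprob : IsProbabilityMeasure ν := Measure.isProbabilityMeasure_map hX.aemeasurable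
  have hκprob : IsProbabilityMeasure κ := Measure.isProbabilityMeasure_map hBL
  -- independence: map of pair is product (with (B,L) first)
  have hmap : μ.map (fun ω => ((B ω, L ω), X ω)) = κ.prod ν :=
    (indepFun_iff_map_prod_eq_prod_map_map hBL hX.aemeasurable).mp hindep.symm
  -- measurable set
  have hSmeas : MeasurableSet {q : (ℝ × ℝ) × ℝ | a q.2 = q.1.1 + c q.2 * q.1.2} :=
    measurableSet_eq_fun (ha.comp measurable_snd)
      ((measurable_fst.fst).add ((hc.comp measurable_snd).mul measurable_fst.snd))
  have hae : ∀ᵐ q ∂(κ.prod ν), a q.2 = q.1.1 + c q.2 * q.1.2 := by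
    rw [← hmap, ae_map_iff (hBL.prodMk hX.aemeasurable) hSmeas]
    exact heq
  have hae2 : ∀ᵐ p ∂κ, ∀ᵐ x ∂ν, a x = p.1 + c x * p.2 := Measure.ae_ae_of_ae_prod hae
  -- transfer Memℒp and integrals
  have haν : MemLp a 2 ν :=
    (memLp_map_measure_iff ha.aestronglyMeasurable hX.aemeasurable).mpr haX
  have hcν : MemLp c 2 ν :=
    (memLp_map_measure_iff hc.aestronglyMeasurable hX.aemeasurable).mpr hcX
  have hIa : ∫ ω, a (X ω) ∂μ = ∫ x, a x ∂ν :=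
    (integral_map hX.aemeasurable ha.aestronglyMeasurable).symm
  have hIc : ∫ ω, c (X ω) ∂μ = ∫ x, c x ∂ν :=
    (integral_map hX.aemeasurable hc.aestronglyMeasurable).symm
  have hIac : ∫ ω, a (X ω) * c (X ω) ∂μ = ∫ x, a x * c x ∂ν :=
    (integral_map hX.aemeasurable (ha.mul hc).aestronglyMeasurable).symm
  have hVa : variance (fun ω => a (X ω)) μ = variance a ν := by
    rw [variance_eq_sub haX, variance_eq_sub haν, hIa]
    congr 1
    simp only [Pi.pow_apply]
    exact (integral_map hX.aemeasurable (ha.pow_const 2).aestronglyMeasurable).symm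
  have hVc : variance (fun ω => c (X ω)) μ = variance c ν := by
    rw [variance_eq_sub hcX, variance_eq_sub hcν, hIc]
    congr 1
    simp only [Pi.pow_apply]
    exact (integral_map hX.aemeasurable (hc.pow_const 2).aestronglyMeasurable).symm
  -- main computation for κ-a.e. p
  have key : ∀ᵐ p ∂κ,
      variance c ν * p.2 ^ 2
        - 2 * ((∫ x, a x * c x ∂ν) - (∫ x, a x ∂ν) * (∫ x, c x ∂ν)) * p.2
        + variance a ν = 0 := by
    filter_upwards [hae2] with p hp
    obtain ⟨b, l⟩ := p
    simp only at hp ⊢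
    have hci : Integrable c ν := hcν.integrable one_le_two
    have hc2i : Integrable (fun x => c x ^ 2) ν := hcν.integrable_sq
    have h1 : ∫ x, a x ∂ν = b + l * ∫ x, c x ∂ν := by
      rw [integral_congr_ae (hp.mono fun x hx => hx)]
      rw [integral_add (integrable_const b) (hci.const_mul l |>.congr ?_)]
      · rw [integral_const, probReal_univ, smul_eq_mul, one_mul]
        congr 1
        rw [← integral_const_mul]
        exact integral_congr_ae (Filter.Eventually.of_forall fun x => mul_comm _ _)
      · exact Filter.Eventually.of_forall fun x => mul_comm l (c x)
    have h2 : ∫ x, a x * c x ∂ν = b * ∫ x, c x ∂ν + l * ∫ x, c x ^ 2 ∂ν := by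
      have : ∫ x, a x * c x ∂ν = ∫ x, b * c x + l * c x ^ 2 ∂ν := by
        apply integral_congr_ae
        filter_upwards [hp] with x hx
        rw [hx]; ring
      rw [this, integral_add (hci.const_mul b) (hc2i.const_mul l),
        integral_const_mul, integral_const_mul]
    have h3 : ∫ x, a x ^ 2 ∂ν = b ^ 2 + 2 * b * l * ∫ x, c x ∂ν + l ^ 2 * ∫ x, c x ^ 2 ∂ν := by
      have heq2 : ∫ x, a x ^ 2 ∂ν = ∫ x, b ^ 2 + ((2 * b * l) * c x + l ^ 2 * c x ^ 2) ∂ν := by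
        apply integral_congr_ae
        filter_upwards [hp] with x hx
        rw [hx]; ring
      have hg : Integrable (fun x => (2 * b * l) * c x + l ^ 2 * c x ^ 2) ν :=
        (hci.const_mul _).add (hc2i.const_mul _)
      rw [heq2, integral_add (integrable_const _) hg,
        integral_add (hci.const_mul _) (hc2i.const_mul _),
        integral_const, probReal_univ, smul_eq_mul, one_mul,
        integral_const_mul, integral_const_mul]
      ring
    rw [variance_eq_sub haν, variance_eq_sub hcν]
    simp only [Pi.pow_apply]
    rw [h1, h2, h3]
    ring
  -- transfer back to μ
  rw [hVa, hVc, hIa, hIc, hIac]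
  have := (ae_map_iff hBL (p := fun p : ℝ × ℝ =>
      variance c ν * p.2 ^ 2
        - 2 * ((∫ x, a x * c x ∂ν) - (∫ x, a x ∂ν) * (∫ x, c x ∂ν)) * p.2
        + variance a ν = 0) ?_).mp key
  · exact this
  · exact measurableSet_eq_fun
      ((((measurable_const.mul ((measurable_snd).pow_const 2)).sub
        (measurable_const.mul measurable_snd)).add measurable_const)) measurable_const
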